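/- For density matrices ρ and σ of the same finite dimension, there exists a unital quantum channel Λ (i.e., Λ(I/d) = I/d) with Λ(ρ) = σ if and only if the spectrum of ρ majorizes the spectrum of σ. -/

import Mathlib

open Matrix BigOperators
open scoped ComplexOrder

noncomputable section

/-- A density matrix: positive semidefinite with unit trace. -/
def IsDensity {n : Type*} [Fintype n] (ρ : Matrix n n ℂ) : Prop :=
  ρ.PosSemidef ∧ ρ.trace = 1

/-- A quantum channel (CPTP map), given via a Kraus representation. -/
def IsChannel {m n : Type*} [Fintype m] [Fintype n] [DecidableEq m]
    (Λ : Matrix m m ℂ → Matrix n n ℂ) : Prop :=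
  ∃ (k : ℕ) (K : Fin k → Matrix n m ℂ),
    (∑ i, (K i)ᴴ * K i) = 1 ∧ ∀ ρ, Λ ρ = ∑ i, K i * ρ * (K i)ᴴ

/-- Majorization of (finitely supported) real vectors: equal total sums, and every
partial sum of entries of `b` is dominated by a sum of equally many entries of `a`
(equivalently, sums of the `k` largest entries dominate). -/
def Majorizes {ι κ : Type*} [Fintype ι] [Fintype κ] (a : ι → ℝ) (b : κ → ℝ) : Prop :=
  (∑ i, a i = ∑ j, b j) ∧
  ∀ t : Finset κ, ∃ s : Finset ι, s.card = t.card ∧ ∑ j ∈ t, b j ≤ ∑ i ∈ s, a i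

namespace UCM

variable {d : ℕ}

/-- The finset of `Fin d` indices below `k`. -/
def Ik (d k : ℕ) : Finset (Fin d) := Finset.univ.filter (fun i => (i : ℕ) < k)

lemma mem_Ik {k : ℕ} {i : Fin d} : i ∈ Ik d k ↔ (i : ℕ) < k := by simp [Ik]

lemma card_Ik {k : ℕ} (h : k ≤ d) : (Ik d k).card = k := by
  have : Ik d k = Finset.univ.map (Fin.castLEEmb h) := by
    ext i
    simp only [mem_Ik, Finset.mem_map, Finset.mem_univ, true_and]
    constructor
    · intro hi
      exact ⟨⟨(i : ℕ), hi⟩, by ext; simp [Fin.castLEEmb]⟩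
    · rintro ⟨j, rfl⟩
      simpa [Fin.castLEEmb] using j.2
  rw [this, Finset.card_map]
  simp

lemma Ik_card_le (k : ℕ) : (Ik d k).card ≤ k := by
  rcases le_or_gt k d with h | h
  · exact (card_Ik h).le
  · have h1 : (Ik d k).card ≤ d := by
      simpa using Finset.card_le_card (Finset.subset_univ (Ik d k))
    omega

lemma strictMono_le_val {m : ℕ} (f : Fin m → Fin d) (hf : StrictMono f) (i : Fin m) :
    (i : ℕ) ≤ (f i : ℕ) := by
  have h := Finset.card_le_card_of_injOn f (fun x hx => ?_) (hf.injective.injOn)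
    (s := Finset.Iic i) (t := Finset.Iic (f i))
  · simpa using h
  · simp only [Finset.mem_coe, Finset.mem_Iic] at hx ⊢
    exact hf.monotone hx

lemma antitone_sum_le (a : Fin d → ℝ) (ha : Antitone a) (t : Finset (Fin d)) :
    ∑ i ∈ t, a i ≤ ∑ i ∈ Ik d t.card, a i := by
  set m := t.card with hm
  have hmd : m ≤ d := by
    calc m ≤ (Finset.univ : Finset (Fin d)).card := Finset.card_le_card (Finset.subset_univ t)
    _ = d := by simp
  have ht : t = Finset.univ.map (t.orderEmbOfFin hm.symm).toEmbedding := by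
    ext x
    simp only [Finset.mem_map, Finset.mem_univ, true_and]
    constructor
    · intro hx
      have : x ∈ Set.range (t.orderEmbOfFin hm.symm) := by
        rw [Finset.range_orderEmbOfFin]; exact hx
      obtain ⟨j, hj⟩ := this; exact ⟨j, hj⟩
    · rintro ⟨j, rfl⟩
      exact Finset.orderEmbOfFin_mem t hm.symm j
  have hIk : Ik d m = Finset.univ.map (Fin.castLEEmb hmd) := by
    ext i
    simp only [mem_Ik, Finset.mem_map, Finset.mem_univ, true_and]
    constructor
    · intro hi
      exact ⟨⟨(i : ℕ), hi⟩, by ext; simp [Fin.castLEEmb]⟩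
    · rintro ⟨j, rfl⟩
      simpa [Fin.castLEEmb] using j.2
  rw [ht, hIk, Finset.sum_map, Finset.sum_map]
  apply Finset.sum_le_sum
  intro i _
  apply ha
  have := strictMono_le_val _ (t.orderEmbOfFin hm.symm).strictMono i
  simp only [RelEmbedding.coe_toEmbedding] at *
  exact Fin.le_def.mpr (by simpa [Fin.castLEEmb] using this)

/-- Partial-sum majorization for (descending-)sorted vectors. -/
def PMaj (a b : Fin d → ℝ) : Prop :=
  (∑ i, a i = ∑ i, b i) ∧ ∀ k : ℕ, ∑ i ∈ Ik d k, b i ≤ ∑ i ∈ Ik d k, a i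

lemma Ik_self_card {k : ℕ} : Ik d ((Ik d k).card) = Ik d k := by
  rcases le_or_gt k d with h | h
  · rw [card_Ik h]
  · have h1 : Ik d k = Finset.univ := by
      ext i; simpa [mem_Ik] using lt_trans i.2 h
    have hc : (Ik d k).card = d := by rw [h1]; simp
    rw [hc, h1]
    ext i; simpa [mem_Ik] using i.2

lemma maj_of_pmaj {a b : Fin d → ℝ} (hb : Antitone b) (h : PMaj a b) : Majorizes a b := by
  refine ⟨h.1, fun t => ?_⟩
  have htd : t.card ≤ d := by
    have := Finset.card_le_card (Finset.subset_univ t); simpa using this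
  exact ⟨Ik d t.card, card_Ik htd, le_trans (antitone_sum_le b hb t) (h.2 t.card)⟩

lemma pmaj_of_maj {a b : Fin d → ℝ} (ha : Antitone a) (h : Majorizes a b) : PMaj a b := by
  refine ⟨h.1, fun k => ?_⟩
  obtain ⟨s, hcard, hle⟩ := h.2 (Ik d k)
  calc ∑ i ∈ Ik d k, b i ≤ ∑ i ∈ s, a i := hle
    _ ≤ ∑ i ∈ Ik d s.card, a i := antitone_sum_le a ha s
    _ = ∑ i ∈ Ik d k, a i := by rw [hcard, Ik_self_card]

lemma maj_comp {a b : Fin d → ℝ} (g h : Equiv.Perm (Fin d)) (hm : Majorizes a b) :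
    Majorizes (a ∘ g) (b ∘ h) := by
  constructor
  · simp only [Function.comp_apply]
    rw [Equiv.sum_comp g a, Equiv.sum_comp h b]; exact hm.1
  · intro t
    obtain ⟨s, hcard, hle⟩ := hm.2 (t.map h.toEmbedding)
    refine ⟨s.map g.symm.toEmbedding, by simp [hcard], ?_⟩
    have h1 : ∑ j ∈ t, (b ∘ h) j = ∑ j ∈ t.map h.toEmbedding, b j := by
      rw [Finset.sum_map]; rfl
    have h2 : ∑ i ∈ s.map g.symm.toEmbedding, (a ∘ g) i = ∑ i ∈ s, a i := by
      rw [Finset.sum_map]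
      exact Finset.sum_congr rfl (fun i _ => by simp)
    rw [h1, h2]; exact hle

/-- Every vector can be sorted into decreasing order by a permutation. -/
lemma exists_antitone_perm (a : Fin d → ℝ) : ∃ g : Equiv.Perm (Fin d), Antitone (a ∘ g) := by
  refine ⟨Tuple.sort (fun i => - a i), fun i j hij => ?_⟩
  have := Tuple.monotone_sort (fun i => - a i) hij
  simp only [Function.comp_apply] at this ⊢
  linarith

lemma permMatrix_apply {R : Type*} [Semiring R] (σ : Equiv.Perm (Fin d)) (i j : Fin d) :
    σ.permMatrix R i j = if j = σ i then 1 else 0 := by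
  simp [Equiv.Perm.permMatrix, PEquiv.toMatrix, Equiv.toPEquiv_apply, Option.mem_def, eq_comm]

lemma permMatrix_mulVec {R : Type*} [CommSemiring R] (σ : Equiv.Perm (Fin d)) (v : Fin d → R) :
    σ.permMatrix R *ᵥ v = v ∘ σ := by
  ext i
  simp only [mulVec, dotProduct, permMatrix_apply, ite_mul, one_mul, zero_mul,
    Function.comp_apply]
  simp

lemma hlp_sorted_aux : ∀ (N : ℕ) (a b : Fin d → ℝ),
    (Finset.univ.filter (fun i => a i ≠ b i)).card ≤ N →
    Antitone a → Antitone b → PMaj a b →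
    ∃ M ∈ doublyStochastic ℝ (Fin d), M *ᵥ a = b := by
  intro N
  induction N with
  | zero =>
    intro a b hcard _ _ _
    have hab : a = b := by
      funext i
      by_contra hi
      have : i ∈ Finset.univ.filter (fun i => a i ≠ b i) := by simp [hi]
      have := Finset.card_pos.mpr ⟨i, this⟩
      omega
    exact ⟨1, Submonoid.one_mem _, by rw [one_mulVec, hab]⟩
  | succ N ih =>
    intro a b hcard ha hb hmaj
    by_cases hab : ∀ i, a i = b i
    · exact ⟨1, Submonoid.one_mem _, by rw [one_mulVec]; funext i; exact hab i⟩
    -- the set where a < b is nonempty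
    have hKne : (Finset.univ.filter (fun i => a i < b i)).Nonempty := by
      by_contra hK
      rw [Finset.not_nonempty_iff_eq_empty] at hK
      have hge : ∀ i, b i ≤ a i := by
        intro i
        by_contra hlt
        have : i ∈ Finset.univ.filter (fun i => a i < b i) := by
          simp [lt_of_not_ge hlt]
        rw [hK] at this; exact absurd this (Finset.notMem_empty i)
      have : ∀ i ∈ Finset.univ, b i = a i :=
        (Finset.sum_eq_sum_iff_of_le (fun i _ => hge i)).mp hmaj.1.symm
      exact hab (fun i => ((this i (Finset.mem_univ i)).symm))
    set k : Fin d := (Finset.univ.filter (fun i => a i < b i)).min' hKne with hk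
    have hkmem : a k < b k := by
      have := (Finset.univ.filter (fun i => a i < b i)).min'_mem hKne
      simpa using this
    have hblek : ∀ i : Fin d, i < k → b i ≤ a i := by
      intro i hik
      by_contra hlt
      have hmem : i ∈ Finset.univ.filter (fun i => a i < b i) := by
        simp [lt_of_not_ge hlt]
      have := Finset.min'_le _ i hmem
      exact absurd hik (not_lt.mpr this)
    -- the set of j < k with b j < a j is nonempty
    have hsum_succ := hmaj.2 ((k : ℕ) + 1)
    have hIk_succ : Ik d ((k : ℕ) + 1) = insert k (Ik d (k : ℕ)) := by
      ext i
      simp only [mem_Ik, Finset.mem_insert]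
      constructor
      · intro hi
        rcases Nat.lt_succ_iff_lt_or_eq.mp hi with h | h
        · exact Or.inr h
        · exact Or.inl (Fin.ext h)
      · rintro (rfl | hi)
        · omega
        · omega
    have hknotmem : k ∉ Ik d (k : ℕ) := by simp [mem_Ik]
    have hJne : ((Ik d (k : ℕ)).filter (fun i => b i < a i)).Nonempty := by
      by_contra hJ
      rw [Finset.not_nonempty_iff_eq_empty] at hJ
      have heqIk : ∀ i ∈ Ik d (k : ℕ), a i = b i := by
        intro i hi
        have h1 : b i ≤ a i := hblek i (by have := mem_Ik.mp hi; exact Fin.lt_def.mpr this)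
        have h2 : ¬ b i < a i := by
          intro hlt
          have : i ∈ (Ik d (k : ℕ)).filter (fun i => b i < a i) := by
            simp [hi, hlt]
          rw [hJ] at this; exact absurd this (Finset.notMem_empty i)
        linarith
      rw [hIk_succ, Finset.sum_insert hknotmem, Finset.sum_insert hknotmem] at hsum_succ
      have : ∑ i ∈ Ik d (k : ℕ), b i = ∑ i ∈ Ik d (k : ℕ), a i :=
        Finset.sum_congr rfl (fun i hi => (heqIk i hi).symm)
      linarith
    set j : Fin d := ((Ik d (k : ℕ)).filter (fun i => b i < a i)).max' hJne with hj
    have hjmem : j ∈ Ik d (k : ℕ) ∧ b j < a j := by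
      have := ((Ik d (k : ℕ)).filter (fun i => b i < a i)).max'_mem hJne
      simpa using this
    have hjk : j < k := Fin.lt_def.mpr (mem_Ik.mp hjmem.1)
    have hjik : ∀ i : Fin d, j < i → i < k → a i = b i := by
      intro i hji hik
      have h1 : b i ≤ a i := hblek i hik
      by_contra hne
      have hlt : b i < a i := lt_of_le_of_ne h1 (fun e => hne e.symm)
      have hmem : i ∈ (Ik d (k : ℕ)).filter (fun i => b i < a i) := by
        simp [mem_Ik.mpr (Fin.lt_def.mp hik), hlt]
      have := Finset.le_max' _ i hmem
      exact absurd hji (not_lt.mpr this)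
    have hjk_ne : j ≠ k := ne_of_lt hjk
    have hbjk : b k ≤ b j := hb hjk.le
    have hajak : a k < a j := by linarith
    set δ : ℝ := min (a j - b j) (b k - a k) with hδ
    have hδpos : 0 < δ := by
      apply lt_min <;> linarith
    have hδ1 : δ ≤ a j - b j := min_le_left _ _
    have hδ2 : δ ≤ b k - a k := min_le_right _ _
    set a' : Fin d → ℝ := Function.update (Function.update a j (a j - δ)) k (a k + δ) with ha'def
    have ha'j : a' j = a j - δ := by
      rw [ha'def, Function.update_of_ne hjk_ne, Function.update_self]
    have ha'k : a' k = a k + δ := by rw [ha'def, Function.update_self]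
    have ha'o : ∀ i, i ≠ j → i ≠ k → a' i = a i := by
      intro i h1 h2
      rw [ha'def, Function.update_of_ne h2, Function.update_of_ne h1]
    have hbja'j : b j ≤ a' j := by rw [ha'j]; linarith
    have ha'kbk : a' k ≤ b k := by rw [ha'k]; linarith
    -- antitone a'
    have ha' : Antitone a' := by
      intro x y hxy
      rcases eq_or_lt_of_le hxy with rfl | hxy
      · exact le_refl _
      by_cases hxj : x = j
      · subst hxj
        by_cases hyk : y = k
        · subst hyk; calc a' k ≤ b k := ha'kbk
            _ ≤ b j := hbjk
            _ ≤ a' j := hbja'j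
        · have hyj : y ≠ j := (ne_of_gt hxy)
          rw [ha'o y hyj hyk]
          rcases lt_or_gt_of_ne hyk with h | h
          · have := hjik y hxy h
            calc a y = b y := this
              _ ≤ b j := hb hxy.le
              _ ≤ a' j := hbja'j
          · calc a y ≤ a k := ha h.le
              _ ≤ b k := by linarith
              _ ≤ b j := hbjk
              _ ≤ a' j := hbja'j
      by_cases hxk : x = k
      · subst hxk
        have hyk : y ≠ k := ne_of_gt hxy
        have hyj : y ≠ j := ne_of_gt (lt_trans hjk hxy)
        rw [ha'o y hyj hyk, ha'k]
        calc a y ≤ a k := ha hxy.le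
          _ ≤ a k + δ := by linarith
      · rw [ha'o x hxj hxk]
        by_cases hyj : y = j
        · subst hyj
          have : x < j := hxy
          calc a' j ≤ a j := by rw [ha'j]; linarith
            _ ≤ a x := ha this.le
        by_cases hyk : y = k
        · subst hyk
          rw [ha'k]
          rcases lt_or_gt_of_ne hxj with h | h
          · have hx1 : a j ≤ a x := ha h.le
            have : a k + δ ≤ b k := by linarith
            linarith
          · have hxk' : x < k := hxy
            calc a k + δ ≤ b k := by linarith
              _ ≤ b x := hb hxk'.le
              _ = a x := (hjik x h hxk').symm
        · rw [ha'o y hyj hyk]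
          exact ha hxy.le
    -- sum lemmas for a'
    have hsum_both : ∀ S : Finset (Fin d), j ∈ S → k ∈ S →
        ∑ i ∈ S, a' i = ∑ i ∈ S, a i := by
      intro S hjS hkS
      have hjS' : j ∈ S \ {k} := by
        simp only [Finset.mem_sdiff, Finset.mem_singleton]
        exact ⟨hjS, hjk_ne⟩
      have hjS2 : j ∈ S.erase k := Finset.mem_erase.mpr ⟨hjk_ne, hjS⟩
      rw [ha'def, Finset.sum_update_of_mem hkS, Finset.sum_update_of_mem hjS',
        ← Finset.add_sum_erase S a hkS, ← Finset.add_sum_erase (S.erase k) a hjS2,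
        Finset.erase_eq, Finset.erase_eq]
      ring
    have hsum_j : ∀ S : Finset (Fin d), j ∈ S → k ∉ S →
        ∑ i ∈ S, a' i = (∑ i ∈ S, a i) - δ := by
      intro S hjS hkS
      have h1 : ∑ i ∈ S, a' i = ∑ i ∈ S, Function.update a j (a j - δ) i := by
        apply Finset.sum_congr rfl
        intro i hi
        rw [ha'def, Function.update_of_ne (fun e => hkS (by rw [← e]; exact hi))]
      rw [h1, Finset.sum_update_of_mem hjS, ← Finset.add_sum_erase S a hjS,
        Finset.erase_eq]
      ring
    have hsum_none : ∀ S : Finset (Fin d), j ∉ S → k ∉ S →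
        ∑ i ∈ S, a' i = ∑ i ∈ S, a i := by
      intro S hjS hkS
      apply Finset.sum_congr rfl
      intro i hi
      exact ha'o i (fun e => hjS (by rw [← e]; exact hi)) (fun e => hkS (by rw [← e]; exact hi))
    -- PMaj a' b
    have hmaj' : PMaj a' b := by
      constructor
      · rw [hsum_both Finset.univ (Finset.mem_univ j) (Finset.mem_univ k)]
        exact hmaj.1
      · intro k'
        by_cases hkk' : (k : ℕ) < k'
        · have hkmem' : k ∈ Ik d k' := mem_Ik.mpr hkk'
          have hjmem' : j ∈ Ik d k' := mem_Ik.mpr (by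
            have := Fin.lt_def.mp hjk; omega)
          rw [hsum_both _ hjmem' hkmem']
          exact hmaj.2 k'
        · have hknot : k ∉ Ik d k' := fun h => hkk' (mem_Ik.mp h)
          by_cases hjk' : (j : ℕ) < k'
          · have hjmem' : j ∈ Ik d k' := mem_Ik.mpr hjk'
            rw [hsum_j _ hjmem' hknot]
            have hnonneg : ∀ i ∈ Ik d k', 0 ≤ a i - b i := by
              intro i hi
              have hik : i < k := by
                have h1 := mem_Ik.mp hi
                exact Fin.lt_def.mpr (by omega)
              have := hblek i hik
              linarith
            have hkey : δ ≤ ∑ i ∈ Ik d k', (a i - b i) := by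
              have h1 : a j - b j ≤ ∑ i ∈ Ik d k', (a i - b i) :=
                Finset.single_le_sum hnonneg hjmem'
              linarith
            rw [Finset.sum_sub_distrib] at hkey
            linarith
          · have hjnot : j ∉ Ik d k' := fun h => hjk' (mem_Ik.mp h)
            rw [hsum_none _ hjnot hknot]
            exact hmaj.2 k'
    -- the diff set got smaller
    have hcard' : (Finset.univ.filter (fun i => a' i ≠ b i)).card ≤ N := by
      have hsub : (Finset.univ.filter (fun i => a' i ≠ b i)) ⊆
          (Finset.univ.filter (fun i => a i ≠ b i)) := by
        intro i hi
        simp only [Finset.mem_filter, Finset.mem_univ, true_and] at hi ⊢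
        by_cases h1 : i = j
        · subst h1; exact ne_of_gt hjmem.2
        by_cases h2 : i = k
        · subst h2; exact ne_of_lt hkmem
        · rw [← ha'o i h1 h2]; exact hi
      have hwit : ∃ x, x ∈ (Finset.univ.filter (fun i => a i ≠ b i)) ∧
          x ∉ (Finset.univ.filter (fun i => a' i ≠ b i)) := by
        rcases le_total (a j - b j) (b k - a k) with h | h
        · refine ⟨j, ?_, ?_⟩
          · simp only [Finset.mem_filter, Finset.mem_univ, true_and]
            exact ne_of_gt hjmem.2
          · simp only [Finset.mem_filter, Finset.mem_univ, true_and, not_not]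
            rw [ha'j, hδ, min_eq_left h]; ring
        · refine ⟨k, ?_, ?_⟩
          · simp only [Finset.mem_filter, Finset.mem_univ, true_and]
            exact ne_of_lt hkmem
          · simp only [Finset.mem_filter, Finset.mem_univ, true_and, not_not]
            rw [ha'k, hδ, min_eq_right h]; ring
      obtain ⟨x, hx1, hx2⟩ := hwit
      have hss : (Finset.univ.filter (fun i => a' i ≠ b i)) ⊂
          (Finset.univ.filter (fun i => a i ≠ b i)) :=
        Finset.ssubset_iff_of_subset hsub |>.mpr ⟨x, hx1, hx2⟩
      have := Finset.card_lt_card hss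
      omega
    obtain ⟨M', hM', hM'v⟩ := ih a' b hcard' ha' hb hmaj'
    -- the T-transform
    set t : ℝ := δ / (a j - a k) with hT
    have hden : 0 < a j - a k := by linarith
    have ht0 : 0 ≤ t := le_of_lt (div_pos hδpos hden)
    have ht1 : t ≤ 1 := by
      rw [hT, div_le_one hden]
      linarith
    set P : Matrix (Fin d) (Fin d) ℝ := (Equiv.swap j k).permMatrix ℝ with hP
    have hTmem : (1 - t) • (1 : Matrix (Fin d) (Fin d) ℝ) + t • P ∈
        doublyStochastic ℝ (Fin d) := by
      apply convex_doublyStochastic (Submonoid.one_mem _) permMatrix_mem_doublyStochastic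
        (by linarith) ht0 (by ring)
    have htac : t * (a j - a k) = δ := div_mul_cancel₀ δ hden.ne'
    have hTv : ((1 - t) • (1 : Matrix (Fin d) (Fin d) ℝ) + t • P) *ᵥ a = a' := by
      funext i
      rw [add_mulVec, smul_mulVec, smul_mulVec, one_mulVec, hP,
        permMatrix_mulVec]
      simp only [Pi.add_apply, Pi.smul_apply, smul_eq_mul, Function.comp_apply]
      by_cases h1 : i = j
      · subst h1
        rw [Equiv.swap_apply_left, ha'j]
        nlinarith [htac]
      by_cases h2 : i = k
      · subst h2
        rw [Equiv.swap_apply_right, ha'k]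
        nlinarith [htac]
      · rw [Equiv.swap_apply_of_ne_of_ne h1 h2, ha'o i h1 h2]
        ring
    refine ⟨M' * ((1 - t) • (1 : Matrix (Fin d) (Fin d) ℝ) + t • P),
      mul_mem hM' hTmem, ?_⟩
    rw [← mulVec_mulVec, hTv, hM'v]

/-- Hardy–Littlewood–Pólya: majorization gives a doubly stochastic transfer matrix. -/
lemma hlp {a b : Fin d → ℝ} (h : Majorizes a b) :
    ∃ M ∈ doublyStochastic ℝ (Fin d), M *ᵥ a = b := by
  obtain ⟨g, hg⟩ := exists_antitone_perm a
  obtain ⟨f, hf⟩ := exists_antitone_perm b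
  have hm : Majorizes (a ∘ g) (b ∘ f) := maj_comp g f h
  obtain ⟨M₀, hM₀, hM₀v⟩ := hlp_sorted_aux _ (a ∘ g) (b ∘ f) le_rfl hg hf
    (pmaj_of_maj hg hm)
  rw [mem_doublyStochastic_iff_sum] at hM₀
  refine ⟨fun i i' => M₀ (f⁻¹ i) (g⁻¹ i'), ?_, ?_⟩
  · refine mem_doublyStochastic_iff_sum.mpr ?_
    refine ⟨fun i i' => hM₀.1 _ _, fun i => ?_, fun i' => ?_⟩
    · rw [← Equiv.sum_comp g (fun i' => M₀ (f⁻¹ i) (g⁻¹ i'))]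
      simp only [Equiv.symm_apply_apply, Equiv.Perm.coe_inv, Equiv.symm_apply_apply]
      exact hM₀.2.1 _
    · rw [← Equiv.sum_comp f (fun i => M₀ (f⁻¹ i) (g⁻¹ i'))]
      simp only [Equiv.Perm.coe_inv, Equiv.symm_apply_apply]
      exact hM₀.2.2 _
  · funext i
    have h1 : (M₀ *ᵥ (a ∘ g)) (f⁻¹ i) = (b ∘ f) (f⁻¹ i) := by rw [hM₀v]
    simp only [Function.comp_apply, Equiv.Perm.coe_inv, Equiv.apply_symm_apply] at h1
    rw [← h1]
    simp only [mulVec, dotProduct]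
    rw [← Equiv.sum_comp g (fun i' => M₀ (f⁻¹ i) (g⁻¹ i') * a i')]
    simp only [Equiv.Perm.coe_inv, Equiv.symm_apply_apply, Function.comp_apply]

lemma permMatrix_conjTranspose (σ : Equiv.Perm (Fin d)) :
    (σ.permMatrix ℂ)ᴴ = (σ⁻¹).permMatrix ℂ := by
  ext i j
  simp only [conjTranspose_apply, permMatrix_apply]
  have hiff : i = σ j ↔ j = σ⁻¹ i := by
    constructor
    · rintro rfl; simp
    · rintro rfl; simp
  by_cases h : i = σ j
  · rw [if_pos h, if_pos (hiff.mp h)]; simp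
  · rw [if_neg h, if_neg (fun hc => h (hiff.mpr hc))]; simp

lemma permMatrix_conj_diagonal (σ : Equiv.Perm (Fin d)) (f : Fin d → ℂ) :
    σ.permMatrix ℂ * diagonal f * (σ.permMatrix ℂ)ᴴ = diagonal (f ∘ σ) := by
  rw [permMatrix_conjTranspose]
  ext i j
  rw [Matrix.mul_assoc, Matrix.mul_apply]
  simp only [permMatrix_apply, Matrix.mul_apply, diagonal_apply, Function.comp_apply]
  rw [Finset.sum_eq_single (σ i) (fun x _ hx => by rw [if_neg hx, zero_mul])
    (fun h => absurd (Finset.mem_univ _) h)]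
  rw [if_pos rfl, one_mul,
    Finset.sum_eq_single (σ i) (fun x _ hx => by rw [if_neg (fun e => hx e.symm), zero_mul])
    (fun h => absurd (Finset.mem_univ _) h), if_pos rfl]
  have : (j = σ⁻¹ (σ i)) ↔ (i = j) := by
    constructor
    · rintro rfl; simp
    · rintro rfl; simp
  by_cases h : i = j
  · rw [if_pos (this.mpr h), mul_one, if_pos h]
  · rw [if_neg (fun c => h (this.mp c)), mul_zero, if_neg h]

lemma permMatrix_mul_conjTranspose (σ : Equiv.Perm (Fin d)) :
    σ.permMatrix ℂ * (σ.permMatrix ℂ)ᴴ = 1 := by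
  have := permMatrix_conj_diagonal σ (fun _ => (1 : ℂ))
  simpa [Matrix.diagonal_one, Function.comp_def] using this

lemma conjTranspose_mul_permMatrix (σ : Equiv.Perm (Fin d)) :
    (σ.permMatrix ℂ)ᴴ * σ.permMatrix ℂ = 1 := by
  have := permMatrix_mul_conjTranspose σ⁻¹
  rw [← permMatrix_conjTranspose σ] at this
  rw [← this, conjTranspose_conjTranspose]

lemma posSemidef_sum {ι : Type*} (s : Finset ι) (f : ι → Matrix (Fin d) (Fin d) ℂ)
    (hf : ∀ i ∈ s, (f i).PosSemidef) : (∑ i ∈ s, f i).PosSemidef := by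
  classical
  induction s using Finset.induction_on with
  | empty => simpa using Matrix.PosSemidef.zero
  | @insert x s' hnot ih =>
    rw [Finset.sum_insert hnot]
    have h1 := hf x (Finset.mem_insert_self x s')
    have h2 := ih (fun i hi => hf i (Finset.mem_insert_of_mem hi))
    exact h1.add h2

lemma trace_nonneg_of_posSemidef {A : Matrix (Fin d) (Fin d) ℂ} (hA : A.PosSemidef) :
    0 ≤ A.trace := by
  rw [Matrix.trace]
  apply Finset.sum_nonneg
  intro i _
  have := hA.dotProduct_mulVec_nonneg (Pi.single i 1)
  simpa [Matrix.diag, mulVec_single, dotProduct, Pi.single_apply] using this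

open scoped MatrixOrder in
lemma trace_mul_nonneg {A B : Matrix (Fin d) (Fin d) ℂ} (hA : A.PosSemidef)
    (hB : B.PosSemidef) : 0 ≤ (A * B).trace := by
  have hS : (CFC.sqrt A).PosSemidef := by
    exact Matrix.nonneg_iff_posSemidef.mp (CFC.sqrt_nonneg A)
  have h1 : A * B = CFC.sqrt A * (CFC.sqrt A * B) := by
    rw [← Matrix.mul_assoc, CFC.sqrt_mul_sqrt_self A hA.nonneg]
  rw [h1, trace_mul_comm]
  have h2 : CFC.sqrt A * B * CFC.sqrt A = CFC.sqrt A * B * (CFC.sqrt A)ᴴ := by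
    rw [hS.1]
  rw [h2]
  exact trace_nonneg_of_posSemidef (hB.mul_mul_conjTranspose_same (CFC.sqrt A))

/-- The fractional knapsack bound: a `[0,1]`-weighted combination summing to `k`
is dominated by the sum of the `k` largest entries. -/
lemma knapsack (a γ : Fin d → ℝ) (h0 : ∀ i, 0 ≤ γ i) (h1 : ∀ i, γ i ≤ 1)
    (k : ℕ) (hk : k ≤ d) (hs : ∑ i, γ i = k) :
    ∃ s : Finset (Fin d), s.card = k ∧ ∑ i, γ i * a i ≤ ∑ i ∈ s, a i := by
  rcases Nat.eq_zero_or_pos k with rfl | hkpos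
  · refine ⟨∅, by simp, ?_⟩
    have hz : ∀ i, γ i = 0 := by
      intro i
      have := Finset.sum_eq_zero_iff_of_nonneg (fun i _ => h0 i) |>.mp (by simpa using hs)
      exact this i (Finset.mem_univ i)
    simp [hz]
  · obtain ⟨g, hg⟩ := exists_antitone_perm a
    set s : Finset (Fin d) := (Ik d k).map g.toEmbedding with hsdef
    have hcard : s.card = k := by rw [hsdef, Finset.card_map, card_Ik hk]
    have hkd : k - 1 < d := by omega
    set m : ℝ := a (g ⟨k - 1, hkd⟩) with hm
    have key1 : ∀ i ∈ s, m ≤ a i := by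
      intro i hi
      obtain ⟨x, hx, rfl⟩ := Finset.mem_map.mp hi
      have hxk := mem_Ik.mp hx
      exact hg (show x ≤ ⟨k - 1, hkd⟩ from Fin.le_def.mpr (by simp; omega))
    have key2 : ∀ i ∉ s, a i ≤ m := by
      intro i hi
      have hgi : i = g (g⁻¹ i) := by simp
      have hnot : g⁻¹ i ∉ Ik d k := by
        intro hc
        exact hi (Finset.mem_map.mpr ⟨g⁻¹ i, hc, by simp⟩)
      have hge : k ≤ ((g⁻¹ i : Fin d) : ℕ) := le_of_not_gt (fun hc => hnot (mem_Ik.mpr hc))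
      rw [hgi]
      exact hg (show (⟨k - 1, hkd⟩ : Fin d) ≤ g⁻¹ i from Fin.le_def.mpr (by simp at hge ⊢; omega))
    refine ⟨s, hcard, ?_⟩
    have hsplitγ : ∑ i ∈ s, γ i + ∑ i ∈ sᶜ, γ i = (k : ℝ) := by
      rw [Finset.sum_add_sum_compl, hs]
    have hb1 : ∀ i ∈ s, γ i * a i ≤ a i + (γ i - 1) * m := by
      intro i hi
      nlinarith [key1 i hi, h1 i]
    have hb2 : ∀ i ∈ sᶜ, γ i * a i ≤ γ i * m := by
      intro i hi
      exact mul_le_mul_of_nonneg_left (key2 i (by simpa using hi)) (h0 i)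
    have hγs : ∑ i ∈ s, (a i + (γ i - 1) * m) =
        ∑ i ∈ s, a i + (∑ i ∈ s, γ i - k) * m := by
      rw [Finset.sum_add_distrib, ← Finset.sum_mul, Finset.sum_sub_distrib,
        Finset.sum_const, hcard]
      simp
    calc ∑ i, γ i * a i = ∑ i ∈ s, γ i * a i + ∑ i ∈ sᶜ, γ i * a i :=
          (Finset.sum_add_sum_compl s _).symm
      _ ≤ ∑ i ∈ s, (a i + (γ i - 1) * m) + ∑ i ∈ sᶜ, γ i * m :=
          add_le_add (Finset.sum_le_sum hb1) (Finset.sum_le_sum hb2)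
      _ = ∑ i ∈ s, a i + (∑ i ∈ s, γ i - k) * m + (∑ i ∈ sᶜ, γ i) * m := by
          rw [hγs, Finset.sum_mul]
      _ = ∑ i ∈ s, a i + (∑ i ∈ s, γ i + ∑ i ∈ sᶜ, γ i - k) * m := by ring
      _ = ∑ i ∈ s, a i := by rw [hsplitγ]; ring

end UCM

open UCM in
/-- `ρ` can be converted into `σ` by a unital quantum channel if and only if
the spectrum of `ρ` majorizes the spectrum of `σ`. -/
theorem unital_channel_iff_majorizes (d : ℕ) (hd : 0 < d)
    (ρ σ : Matrix (Fin d) (Fin d) ℂ) (hρ : IsDensity ρ) (hσ : IsDensity σ) :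
    (∃ Λ : Matrix (Fin d) (Fin d) ℂ → Matrix (Fin d) (Fin d) ℂ,
        IsChannel Λ ∧ Λ 1 = 1 ∧ Λ ρ = σ) ↔
      Majorizes hρ.1.1.eigenvalues hσ.1.1.eigenvalues := by
  set a : Fin d → ℝ := hρ.1.1.eigenvalues with ha
  set b : Fin d → ℝ := hσ.1.1.eigenvalues with hb
  set V : Matrix (Fin d) (Fin d) ℂ := (hρ.1.1.eigenvectorUnitary : Matrix (Fin d) (Fin d) ℂ)
    with hV
  set W : Matrix (Fin d) (Fin d) ℂ := (hσ.1.1.eigenvectorUnitary : Matrix (Fin d) (Fin d) ℂ)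
    with hW
  have hV1 : V * Vᴴ = 1 := by
    rw [← Matrix.star_eq_conjTranspose]
    exact (Matrix.mem_unitaryGroup_iff).mp hρ.1.1.eigenvectorUnitary.2
  have hV2 : Vᴴ * V = 1 := by
    rw [← Matrix.star_eq_conjTranspose]
    exact (Matrix.mem_unitaryGroup_iff').mp hρ.1.1.eigenvectorUnitary.2
  have hW1 : W * Wᴴ = 1 := by
    rw [← Matrix.star_eq_conjTranspose]
    exact (Matrix.mem_unitaryGroup_iff).mp hσ.1.1.eigenvectorUnitary.2
  have hW2 : Wᴴ * W = 1 := by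
    rw [← Matrix.star_eq_conjTranspose]
    exact (Matrix.mem_unitaryGroup_iff').mp hσ.1.1.eigenvectorUnitary.2
  have hρspec : ρ = V * diagonal (fun i => (a i : ℂ)) * Vᴴ := by
    have := hρ.1.1.spectral_theorem
    rw [Unitary.conjStarAlgAut_apply] at this
    rw [← Matrix.star_eq_conjTranspose]
    exact this
  have hσspec : σ = W * diagonal (fun i => (b i : ℂ)) * Wᴴ := by
    have := hσ.1.1.spectral_theorem
    rw [Unitary.conjStarAlgAut_apply] at this
    rw [← Matrix.star_eq_conjTranspose]
    exact this
  have cancel : ∀ (A B : Matrix (Fin d) (Fin d) ℂ), A * B = 1 →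
      ∀ X, A * (B * X) = X := by
    intro A B h X
    rw [← Matrix.mul_assoc, h, Matrix.one_mul]
  have hasum : (∑ i, a i : ℂ) = 1 := by
    have h1 : ρ.trace = ∑ i, (a i : ℂ) := by
      rw [hρspec, Matrix.trace_mul_cycle, hV2, Matrix.one_mul,
        Matrix.trace_diagonal]
    rw [← hρ.2, h1]
  have hbsum : (∑ i, b i : ℂ) = 1 := by
    have h1 : σ.trace = ∑ i, (b i : ℂ) := by
      rw [hσspec, Matrix.trace_mul_cycle, hW2, Matrix.one_mul,
        Matrix.trace_diagonal]
    rw [← hσ.2, h1]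
  have hab : ∑ i, a i = ∑ i, b i := by
    have : ((∑ i, a i : ℝ) : ℂ) = ((∑ i, b i : ℝ) : ℂ) := by
      push_cast
      rw [hasum, hbsum]
    exact_mod_cast this
  constructor
  · rintro ⟨Λ, ⟨nk, K, hK1, hKr⟩, hU, hM⟩
    -- trace preservation
    have htp : ∀ X : Matrix (Fin d) (Fin d) ℂ, (Λ X).trace = X.trace := by
      intro X
      rw [hKr, trace_sum]
      have hterm : ∀ i, (K i * X * (K i)ᴴ).trace = ((K i)ᴴ * K i * X).trace := by
        intro i
        rw [Matrix.trace_mul_cycle]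
      rw [Finset.sum_congr rfl (fun i _ => hterm i), ← trace_sum, ← Finset.sum_mul, hK1,
        Matrix.one_mul]
    have hPSD : ∀ X : Matrix (Fin d) (Fin d) ℂ, X.PosSemidef → (Λ X).PosSemidef := by
      intro X hX
      rw [hKr]
      exact posSemidef_sum _ _ (fun i _ => hX.mul_mul_conjTranspose_same _)
    -- rank-one spectral projectors of ρ
    set R : Fin d → Matrix (Fin d) (Fin d) ℂ :=
      fun i => V * diagonal (fun i' => if i' = i then (1 : ℂ) else 0) * Vᴴ with hR
    have hRpsd : ∀ i, (R i).PosSemidef := by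
      intro i
      apply Matrix.PosSemidef.mul_mul_conjTranspose_same
      apply Matrix.PosSemidef.diagonal
      intro i'
      dsimp only
      split <;> simp
    have hRtr : ∀ i, (R i).trace = 1 := by
      intro i
      rw [hR]
      rw [Matrix.trace_mul_cycle, hV2, Matrix.one_mul,
        Matrix.trace_diagonal]
      simp
    have hdiagsum : ∀ c : Fin d → ℂ,
        ∑ i, c i • diagonal (fun i' => if i' = i then (1 : ℂ) else 0) = diagonal c := by
      intro c
      ext i' j'
      rw [Matrix.sum_apply]
      simp only [Matrix.smul_apply, diagonal_apply, smul_eq_mul]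
      by_cases h : i' = j'
      · subst h
        simp
      · simp [h]
    have hRcomb : ∀ c : Fin d → ℂ, ∑ i, c i • R i = V * diagonal c * Vᴴ := by
      intro c
      rw [hR]
      have h1 : ∀ i, c i • (V * diagonal (fun i' => if i' = i then (1:ℂ) else 0) * Vᴴ) =
          V * (c i • diagonal (fun i' => if i' = i then (1:ℂ) else 0)) * Vᴴ := by
        intro i
        rw [Matrix.mul_smul, Matrix.smul_mul]
      rw [Finset.sum_congr rfl (fun i _ => h1 i), ← Finset.sum_mul, ← Finset.mul_sum,
        hdiagsum]
    have hRsum : ∑ i, R i = 1 := by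
      have := hRcomb (fun _ => 1)
      simp only [one_smul] at this
      rw [this, Matrix.diagonal_one, Matrix.mul_one, hV1]
    have hRsuma : ∑ i, (a i : ℂ) • R i = ρ := by
      rw [hRcomb, ← hρspec]
    -- linearity of the Kraus form
    have hlin : ∀ c : Fin d → ℂ, Λ (∑ i, c i • R i) = ∑ i, c i • Λ (R i) := by
      intro c
      rw [hKr]
      have h1 : ∀ kk, K kk * (∑ i, c i • R i) * (K kk)ᴴ =
          ∑ i, c i • (K kk * R i * (K kk)ᴴ) := by
        intro kk
        rw [Finset.mul_sum, Finset.sum_mul]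
        apply Finset.sum_congr rfl
        intro i _
        rw [mul_smul_comm, Matrix.smul_mul]
      rw [Finset.sum_congr rfl (fun kk _ => h1 kk), Finset.sum_comm]
      apply Finset.sum_congr rfl
      intro i _
      rw [hKr, Finset.smul_sum]
    refine ⟨hab, fun t => ?_⟩
    -- the projector onto the eigenvectors of σ indexed by t
    set χ : Fin d → ℂ := fun jj => if jj ∈ t then 1 else 0 with hχ
    set P : Matrix (Fin d) (Fin d) ℂ := W * diagonal χ * Wᴴ with hP
    have hPpsd : P.PosSemidef := by
      apply Matrix.PosSemidef.mul_mul_conjTranspose_same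
      apply Matrix.PosSemidef.diagonal
      intro i'
      rw [hχ]
      dsimp only
      split <;> simp
    have h1Ppsd : (1 - P).PosSemidef := by
      have : (1 : Matrix (Fin d) (Fin d) ℂ) - P = W * diagonal (fun jj => 1 - χ jj) * Wᴴ := by
        have hd1 : diagonal (fun jj => 1 - χ jj) =
            (1 : Matrix (Fin d) (Fin d) ℂ) - diagonal χ := by
          rw [← Matrix.diagonal_one, Matrix.diagonal_sub]
        rw [hd1, Matrix.mul_sub, Matrix.sub_mul, Matrix.mul_one, hW1, hP]
      rw [this]
      apply Matrix.PosSemidef.mul_mul_conjTranspose_same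
      apply Matrix.PosSemidef.diagonal
      intro i'
      rw [hχ]
      dsimp only
      split <;> simp
    have hPtr : P.trace = (t.card : ℂ) := by
      rw [hP, Matrix.trace_mul_cycle, hW2, Matrix.one_mul,
        Matrix.trace_diagonal, hχ]
      simp
    have hPσ : (P * σ).trace = ∑ jj ∈ t, (b jj : ℂ) := by
      rw [hP, hσspec]
      have e1 : Wᴴ * (W * diagonal (fun i => (b i : ℂ)) * Wᴴ) =
          diagonal (fun i => (b i : ℂ)) * Wᴴ := by
        rw [← Matrix.mul_assoc, ← Matrix.mul_assoc, hW2, Matrix.one_mul]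
      have : W * diagonal χ * Wᴴ * (W * diagonal (fun i => (b i : ℂ)) * Wᴴ) =
          W * (diagonal χ * diagonal (fun i => (b i : ℂ))) * Wᴴ := by
        rw [Matrix.mul_assoc (W * diagonal χ) Wᴴ, e1, ← Matrix.mul_assoc,
          Matrix.mul_assoc W (diagonal χ)]
      rw [this, Matrix.trace_mul_cycle, hW2, Matrix.one_mul,
        Matrix.diagonal_mul_diagonal, Matrix.trace_diagonal, hχ]
      simp only [ite_mul, one_mul, zero_mul]
      rw [Finset.sum_ite_mem]
      simp
    set c : Fin d → ℂ := fun i => (P * Λ (R i)).trace with hc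
    have hc0 : ∀ i, 0 ≤ c i := fun i => trace_mul_nonneg hPpsd (hPSD _ (hRpsd i))
    have hc1 : ∀ i, c i ≤ 1 := by
      intro i
      have h1 : 0 ≤ ((1 - P) * Λ (R i)).trace :=
        trace_mul_nonneg h1Ppsd (hPSD _ (hRpsd i))
      have h2 : ((1 - P) * Λ (R i)).trace = 1 - c i := by
        rw [Matrix.sub_mul, Matrix.one_mul, trace_sub, htp, hRtr]
      rw [h2] at h1
      rwa [sub_nonneg] at h1
    have hΛ1 : ∑ i, Λ (R i) = 1 := by
      have h1 := hlin (fun _ => 1)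
      simp only [one_smul] at h1
      rw [← h1, hRsum, hU]
    have hcsum : ∑ i, c i = (t.card : ℂ) := by
      rw [hc]
      have h1 : ∑ i, (P * Λ (R i)).trace = (P * ∑ i, Λ (R i)).trace := by
        rw [Finset.mul_sum, trace_sum]
      rw [h1, hΛ1, Matrix.mul_one, hPtr]
    have hcw : ∑ i, (a i : ℂ) * c i = ∑ jj ∈ t, (b jj : ℂ) := by
      have h1 : ∀ i, (a i : ℂ) * c i = (P * ((a i : ℂ) • Λ (R i))).trace := by
        intro i
        rw [hc, mul_smul_comm, trace_smul, smul_eq_mul]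
      rw [Finset.sum_congr rfl (fun i _ => h1 i), ← trace_sum, ← Finset.mul_sum,
        ← hlin, hRsuma, hM, hPσ]
    -- pass to the real parts
    set γ : Fin d → ℝ := fun i => (c i).re with hγ
    have hcγ : ∀ i, c i = ((γ i : ℝ) : ℂ) := by
      intro i
      have him := (Complex.le_def.mp (hc0 i)).2
      apply Complex.ext
      · simp [hγ]
      · simp [hγ, ← him]
    have hγ0 : ∀ i, 0 ≤ γ i := fun i => (Complex.le_def.mp (hc0 i)).1
    have hγ1 : ∀ i, γ i ≤ 1 := by
      intro i
      have := (Complex.le_def.mp (hc1 i)).1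
      simpa [hγ] using this
    have hγsum : ∑ i, γ i = (t.card : ℝ) := by
      have : ((∑ i, γ i : ℝ) : ℂ) = ((t.card : ℝ) : ℂ) := by
        push_cast
        rw [← hcsum]
        exact Finset.sum_congr rfl (fun i _ => (hcγ i).symm) |>.symm ▸ rfl
      exact_mod_cast this
    have hγw : ∑ i, γ i * a i = ∑ jj ∈ t, b jj := by
      have : ((∑ i, γ i * a i : ℝ) : ℂ) = ((∑ jj ∈ t, b jj : ℝ) : ℂ) := by
        push_cast
        rw [← hcw]
        apply Finset.sum_congr rfl
        intro i _
        rw [hcγ i]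
        push_cast
        ring
      exact_mod_cast this
    have htd : t.card ≤ d := by
      have := Finset.card_le_univ t
      simpa using this
    obtain ⟨s, hscard, hsle⟩ := knapsack a γ hγ0 hγ1 t.card htd hγsum
    exact ⟨s, hscard, by rw [← hγw]; exact hsle⟩
  · intro hmaj
    obtain ⟨M, hMds, hMv⟩ := hlp hmaj
    obtain ⟨w, hw0, hw1, hwM⟩ := exists_eq_sum_perm_of_mem_doublyStochastic hMds
    -- b i = ∑ π, w π * a (π i)
    have hbw : ∀ i, b i = ∑ π : Equiv.Perm (Fin d), w π * a (π i) := by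
      intro i
      have h1 : ((∑ π : Equiv.Perm (Fin d), w π • π.permMatrix ℝ) *ᵥ a) i = b i := by
        rw [hwM, hMv]
      rw [← h1]
      simp only [Matrix.mulVec, dotProduct, Matrix.sum_apply, Matrix.smul_apply,
        smul_eq_mul, Finset.sum_mul]
      rw [Finset.sum_comm]
      apply Finset.sum_congr rfl
      intro π _
      simp [permMatrix_apply, ite_mul, mul_ite, Equiv.toPEquiv_apply]
    -- the mixed-unitary channel
    set Kmat : Equiv.Perm (Fin d) → Matrix (Fin d) (Fin d) ℂ :=
      fun π => ((Real.sqrt (w π) : ℝ) : ℂ) • (W * π.permMatrix ℂ * Vᴴ) with hKmat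
    have hKH : ∀ π, (Kmat π)ᴴ =
        ((Real.sqrt (w π) : ℝ) : ℂ) • (V * (π.permMatrix ℂ)ᴴ * Wᴴ) := by
      intro π
      rw [hKmat]
      dsimp only
      rw [Matrix.conjTranspose_smul, Matrix.conjTranspose_mul, Matrix.conjTranspose_mul,
        Matrix.conjTranspose_conjTranspose]
      congr 1
      · simp [Complex.star_def, Complex.conj_ofReal]
      · rw [Matrix.mul_assoc]
    have hw2 : ∀ π, ((Real.sqrt (w π) : ℝ) : ℂ) * ((Real.sqrt (w π) : ℝ) : ℂ) =
        ((w π : ℝ) : ℂ) := by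
      intro π
      rw [← Complex.ofReal_mul, Real.mul_self_sqrt (hw0 π)]
    have hKK : ∀ π, (Kmat π)ᴴ * Kmat π = ((w π : ℝ) : ℂ) • 1 := by
      intro π
      rw [hKH, hKmat]
      dsimp only
      rw [Matrix.smul_mul, Matrix.mul_smul, smul_smul, hw2]
      congr 1
      simp only [Matrix.mul_assoc]
      rw [cancel _ _ hW2, cancel _ _ (conjTranspose_mul_permMatrix π), hV1]
    have hKKrev : ∀ π, Kmat π * (Kmat π)ᴴ = ((w π : ℝ) : ℂ) • 1 := by
      intro π
      rw [hKH, hKmat]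
      dsimp only
      rw [Matrix.smul_mul, Matrix.mul_smul, smul_smul, hw2]
      congr 1
      simp only [Matrix.mul_assoc]
      rw [cancel _ _ hV2, cancel _ _ (permMatrix_mul_conjTranspose π), hW1]
    have hwsumC : ∑ π : Equiv.Perm (Fin d), ((w π : ℝ) : ℂ) = 1 := by
      rw [← Complex.ofReal_sum, hw1, Complex.ofReal_one]
    set N : ℕ := Fintype.card (Equiv.Perm (Fin d)) with hN
    set e : Fin N ≃ Equiv.Perm (Fin d) := (Fintype.equivFin (Equiv.Perm (Fin d))).symm with he
    refine ⟨fun X => ∑ i : Fin N, Kmat (e i) * X * (Kmat (e i))ᴴ,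
      ⟨N, fun i => Kmat (e i), ?_, fun X => rfl⟩, ?_, ?_⟩
    · rw [Equiv.sum_comp e (fun π => (Kmat π)ᴴ * Kmat π)]
      rw [Finset.sum_congr rfl (fun π _ => hKK π), ← Finset.sum_smul, hwsumC, one_smul]
    · show ∑ i : Fin N, Kmat (e i) * 1 * (Kmat (e i))ᴴ = 1
      rw [Equiv.sum_comp e (fun π => Kmat π * 1 * (Kmat π)ᴴ)]
      have h1 : ∀ π : Equiv.Perm (Fin d), Kmat π * 1 * (Kmat π)ᴴ = ((w π : ℝ) : ℂ) • 1 := by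
        intro π
        rw [Matrix.mul_one, hKKrev]
      rw [Finset.sum_congr rfl (fun π _ => h1 π), ← Finset.sum_smul, hwsumC, one_smul]
    · show ∑ i : Fin N, Kmat (e i) * ρ * (Kmat (e i))ᴴ = σ
      rw [Equiv.sum_comp e (fun π => Kmat π * ρ * (Kmat π)ᴴ)]
      have h1 : ∀ π : Equiv.Perm (Fin d), Kmat π * ρ * (Kmat π)ᴴ =
          ((w π : ℝ) : ℂ) • (W * diagonal ((fun i => (a i : ℂ)) ∘ π) * Wᴴ) := by
        intro π
        rw [hKH, hKmat]
        dsimp only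
        rw [Matrix.smul_mul, Matrix.mul_smul, Matrix.smul_mul, smul_smul, hw2]
        congr 1
        rw [hρspec]
        have e2 : π.permMatrix ℂ * (diagonal (fun i => (a i : ℂ)) *
            ((π.permMatrix ℂ)ᴴ * Wᴴ)) = diagonal ((fun i => (a i : ℂ)) ∘ π) * Wᴴ := by
          rw [← Matrix.mul_assoc, ← Matrix.mul_assoc, permMatrix_conj_diagonal]
        simp only [Matrix.mul_assoc]
        rw [cancel _ _ hV2, cancel _ _ hV2, e2]
      rw [Finset.sum_congr rfl (fun π _ => h1 π)]
      have h2 : ∀ π : Equiv.Perm (Fin d),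
          ((w π : ℝ) : ℂ) • (W * diagonal ((fun i => (a i : ℂ)) ∘ π) * Wᴴ) =
          W * (((w π : ℝ) : ℂ) • diagonal ((fun i => (a i : ℂ)) ∘ π)) * Wᴴ := by
        intro π
        rw [Matrix.mul_smul, Matrix.smul_mul]
      rw [Finset.sum_congr rfl (fun π _ => h2 π), ← Finset.sum_mul, ← Finset.mul_sum]
      have h3 : ∑ π : Equiv.Perm (Fin d),
          ((w π : ℝ) : ℂ) • diagonal ((fun i => (a i : ℂ)) ∘ π) =
          diagonal (fun i => (b i : ℂ)) := by
        ext i j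
        rw [Matrix.sum_apply]
        simp only [Matrix.smul_apply, diagonal_apply, Function.comp_apply, smul_eq_mul]
        by_cases h : i = j
        · subst h
          simp only [if_pos rfl]
          rw [hbw i]
          push_cast
          rfl
        · simp [h]
      rw [h3, ← hσspec]
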